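/- Let i, k, l be natural numbers with i ≤ k and i ≤ l, and let t ∈ F. Then Σ_{j=0}^{l} [l choose j]_q [k+j choose i]_q (-1)^{l-j} (-q^i t; q)_{k+j-i} q^{j(j+1)/2 - lj + i(i-1)/2} = Σ_{j=0}^{k} [k choose j]_q [l+j choose i]_q t^{l+j-i} q^{kl + j(j-1)/2}. -/

import Mathlib

open Finset

/-- The q-Pochhammer symbol `(a;q)_n = ∏_{j=0}^{n-1} (1 - a q^j)`. -/
def qPoch {F : Type*} [Field F] (q a : F) (n : ℕ) : F :=
  ∏ j ∈ Finset.range n, (1 - a * q ^ j)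

/-- The q-binomial coefficient `[n choose i]_q`, equal to 0 when `i > n`. -/
def qBinom {F : Type*} [Field F] (q : F) (n i : ℕ) : F :=
  if i ≤ n then qPoch q q n / (qPoch q q i * qPoch q q (n - i)) else 0

/-- The q-integer `[n]_q = (1-q^n)/(1-q)`. -/
def qInt {F : Type*} [Field F] (q : F) (n : ℕ) : F := (1 - q ^ n) / (1 - q)

/-- The q-dual sequence `a*_n = ∑_{i=0}^n (-1)^i [n choose i]_q q^{i(i-1)/2} a_i`. -/
def qDual {F : Type*} [Field F] (q : F) (a : ℕ → F) (n : ℕ) : F :=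
  ∑ i ∈ Finset.range (n + 1), (-1 : F) ^ i * qBinom q n i * q ^ (i.choose 2) * a i

lemma choose2_succ (n : ℕ) : (n+1).choose 2 = n.choose 2 + n := by
  rw [Nat.choose_succ_succ, Nat.choose_one_right, Nat.add_comm]

lemma choose2_add (a b : ℕ) : (a+b).choose 2 = a.choose 2 + a*b + b.choose 2 := by
  induction b with
  | zero => simp
  | succ b ih =>
    have : a + (b+1) = (a+b) + 1 := by omega
    rw [this, choose2_succ, ih, choose2_succ]
    ring

section
variable {F : Type*} [Field F] (q : F)

lemma qPoch_zero (a : F) : qPoch q a 0 = 1 := by simp [qPoch]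

lemma qPoch_succ (a : F) (n : ℕ) : qPoch q a (n+1) = qPoch q a n * (1 - a * q ^ n) := by
  simp [qPoch, Finset.prod_range_succ]

variable (hq : ∀ m : ℕ, 0 < m → q ^ m ≠ 1)
include hq

lemma one_sub_pow_ne (m : ℕ) (hm : 0 < m) : (1 : F) - q ^ m ≠ 0 := by
  intro h
  exact hq m hm (sub_eq_zero.mp h).symm

lemma qPoch_q_ne_zero (n : ℕ) : qPoch q q n ≠ 0 := by
  rw [qPoch]
  refine Finset.prod_ne_zero_iff.2 fun j _ h => ?_
  have : (1 : F) - q ^ (j+1) = 0 := by rw [pow_succ']; exact h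
  exact one_sub_pow_ne q hq (j+1) (Nat.succ_pos j) this

lemma qBinom_zero_right (n : ℕ) : qBinom q n 0 = 1 := by
  rw [qBinom, if_pos (Nat.zero_le n)]
  simp [qPoch_zero, div_self (qPoch_q_ne_zero q hq n)]

lemma qBinom_self (n : ℕ) : qBinom q n n = 1 := by
  rw [qBinom, if_pos le_rfl]
  simp [qPoch_zero, div_self (qPoch_q_ne_zero q hq n)]

omit hq in
lemma qBinom_eq_zero {n i : ℕ} (h : n < i) : qBinom q n i = 0 := by
  rw [qBinom, if_neg (by omega)]

lemma pascal₁ (n j : ℕ) :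
    qBinom q (n+1) (j+1) = qBinom q n j + q ^ (j+1) * qBinom q n (j+1) := by
  rcases lt_trichotomy j n with hj | rfl | hj
  · obtain ⟨d, rfl⟩ : ∃ d, n = j + d + 1 := ⟨n - j - 1, by omega⟩
    rw [qBinom, if_pos (by omega), qBinom, if_pos (by omega), qBinom, if_pos (by omega)]
    have h1 : j + d + 1 + 1 - (j + 1) = d + 1 := by omega
    have h2 : j + d + 1 - j = d + 1 := by omega
    have h3 : j + d + 1 - (j + 1) = d := by omega
    rw [h1, h2, h3]
    have e1 : qPoch q q (j + d + 1 + 1) = qPoch q q (j + d + 1) * (1 - q * q ^ (j + d + 1)) :=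
      qPoch_succ q q _
    have e2 : qPoch q q (j + 1) = qPoch q q j * (1 - q * q ^ j) := qPoch_succ q q _
    have e3 : qPoch q q (d + 1) = qPoch q q d * (1 - q * q ^ d) := qPoch_succ q q _
    rw [e1, e2, e3]
    have n1 := qPoch_q_ne_zero q hq j
    have n2 := qPoch_q_ne_zero q hq d
    have n4 : (1 : F) - q * q ^ j ≠ 0 := by
      have := one_sub_pow_ne q hq (j+1) (by omega); rwa [pow_succ'] at this
    have n5 : (1 : F) - q * q ^ d ≠ 0 := by
      have := one_sub_pow_ne q hq (d+1) (by omega); rwa [pow_succ'] at this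
    field_simp
    ring
  · rw [qBinom_self q hq, qBinom_self q hq, qBinom_eq_zero q (by omega), mul_zero, add_zero]
  · rw [qBinom_eq_zero q (by omega), qBinom_eq_zero q (by omega),
      qBinom_eq_zero q (by omega), mul_zero, add_zero]

lemma pascal₂ (n j : ℕ) :
    qBinom q (n+1) (j+1) = q ^ (n-j) * qBinom q n j + qBinom q n (j+1) := by
  rcases lt_trichotomy j n with hj | rfl | hj
  · obtain ⟨d, rfl⟩ : ∃ d, n = j + d + 1 := ⟨n - j - 1, by omega⟩
    rw [qBinom, if_pos (by omega), qBinom, if_pos (by omega), qBinom, if_pos (by omega)]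
    have h1 : j + d + 1 + 1 - (j + 1) = d + 1 := by omega
    have h2 : j + d + 1 - j = d + 1 := by omega
    have h3 : j + d + 1 - (j + 1) = d := by omega
    rw [h1, h2, h3]
    have e1 : qPoch q q (j + d + 1 + 1) = qPoch q q (j + d + 1) * (1 - q * q ^ (j + d + 1)) :=
      qPoch_succ q q _
    have e2 : qPoch q q (j + 1) = qPoch q q j * (1 - q * q ^ j) := qPoch_succ q q _
    have e3 : qPoch q q (d + 1) = qPoch q q d * (1 - q * q ^ d) := qPoch_succ q q _
    rw [e1, e2, e3]
    have n1 := qPoch_q_ne_zero q hq j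
    have n2 := qPoch_q_ne_zero q hq d
    have n4 : (1 : F) - q * q ^ j ≠ 0 := by
      have := one_sub_pow_ne q hq (j+1) (by omega); rwa [pow_succ'] at this
    have n5 : (1 : F) - q * q ^ d ≠ 0 := by
      have := one_sub_pow_ne q hq (d+1) (by omega); rwa [pow_succ'] at this
    field_simp
    ring
  · rw [qBinom_self q hq, qBinom_self q hq, qBinom_eq_zero q (by omega)]
    simp
  · rw [qBinom_eq_zero q (by omega), qBinom_eq_zero q (by omega),
      qBinom_eq_zero q (by omega), mul_zero, add_zero]

lemma qBinom_tri (n a b : ℕ) :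
    qBinom q n a * qBinom q (n-a) b = qBinom q n (a+b) * qBinom q (a+b) a := by
  by_cases ha : a ≤ n
  · by_cases hb : b ≤ n - a
    · obtain ⟨c, rfl⟩ : ∃ c, n = a + b + c := ⟨n - a - b, by omega⟩
      rw [qBinom, if_pos (by omega), qBinom, if_pos (by omega), qBinom, if_pos (by omega),
        qBinom, if_pos (by omega)]
      have h1 : a + b + c - a = b + c := by omega
      have h2 : b + c - b = c := by omega
      have h3 : a + b + c - (a + b) = c := by omega
      have h4 : a + b - a = b := by omega
      rw [h1, h2, h3, h4]
      have n1 := qPoch_q_ne_zero q hq a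
      have n2 := qPoch_q_ne_zero q hq b
      have n3 := qPoch_q_ne_zero q hq c
      have n4 := qPoch_q_ne_zero q hq (a+b)
      have n5 := qPoch_q_ne_zero q hq (b+c)
      field_simp
    · rw [qBinom_eq_zero q (show n - a < b by omega), qBinom_eq_zero q (show n < a + b by omega)]
      simp
  · rw [qBinom_eq_zero q (show n < a by omega), qBinom_eq_zero q (show n < a + b by omega)]
    simp

lemma qbt (n : ℕ) (x : F) :
    qPoch q (-x) n = ∑ m ∈ Finset.range (n+1), qBinom q n m * q ^ m.choose 2 * x ^ m := by
  induction n with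
  | zero => simp [qPoch_zero, qBinom_self q hq]
  | succ n ih =>
    rw [qPoch_succ, ih, Finset.sum_range_succ' _ (n+1)]
    have step : ∀ s ∈ Finset.range (n+1),
        qBinom q (n+1) (s+1) * q ^ (s+1).choose 2 * x ^ (s+1)
        = qBinom q n (s+1) * q ^ (s+1).choose 2 * x ^ (s+1)
          + (qBinom q n s * q ^ s.choose 2 * x ^ s) * (x * q ^ n) := by
      intro s hs
      rw [Finset.mem_range] at hs
      rw [pascal₂ q hq n s]
      have hc : (s+1).choose 2 = s.choose 2 + s := by
        rw [Nat.choose_succ_succ, Nat.choose_one_right, Nat.add_comm]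
      have hpow : q ^ (n - s) * q ^ ((s+1).choose 2) = q ^ s.choose 2 * q ^ n := by
        rw [← pow_add, ← pow_add]
        congr 1
        rw [hc]; omega
      rw [pow_succ]
      linear_combination (qBinom q n s * x ^ s * x) * hpow
    rw [Finset.sum_congr rfl step, Finset.sum_add_distrib, ← Finset.sum_mul]
    have h1 : (∑ s ∈ Finset.range (n+1), qBinom q n (s+1) * q ^ (s+1).choose 2 * x ^ (s+1))
        + qBinom q (n+1) 0 * q ^ (Nat.choose 0 2) * x ^ 0
        = ∑ m ∈ Finset.range (n+1), qBinom q n m * q ^ m.choose 2 * x ^ m := by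
      rw [qBinom_zero_right q hq]
      have := (Finset.sum_range_succ' (fun m => qBinom q n m * q ^ m.choose 2 * x ^ m) (n+1))
      rw [qBinom_zero_right q hq] at this
      rw [← this, Finset.sum_range_succ, qBinom_eq_zero q (Nat.lt_succ_self n)]
      simp
    rw [add_assoc, add_comm
      ((∑ m ∈ Finset.range (n+1), qBinom q n m * q ^ m.choose 2 * x ^ m) * (x * q ^ n)), ← add_assoc,
      h1]
    ring
variable (hq0 : q ≠ 0)
include hq0

lemma key (l : ℕ) : ∀ (k r : ℕ),
    ∑ j ∈ Finset.range (l+1), (-1:F)^(l-j) * qBinom q l j * qBinom q (k+j) r *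
      q ^ (((j+1).choose 2 : ℤ) - (l:ℤ) * (j:ℤ))
    = if l ≤ r then qBinom q k (r-l) * q ^ ((l:ℤ) * ((k:ℤ) + (l:ℤ) - (r:ℤ)) - (l.choose 2 : ℤ))
      else 0 := by
  induction l with
  | zero =>
    intro k r
    rw [Finset.sum_range_one, if_pos (Nat.zero_le r)]
    norm_num [qBinom_zero_right q hq, qBinom_self q hq]
  | succ l ih =>
    intro k r
    rw [Finset.sum_range_succ' _ (l+1)]
    have hstep : ∀ s ∈ Finset.range (l+1),
        (-1:F)^(l+1-(s+1)) * qBinom q (l+1) (s+1) * qBinom q (k+(s+1)) r *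
          q ^ ((((s+1)+1).choose 2 : ℤ) - ((l+1 : ℕ):ℤ) * ((s+1 : ℕ):ℤ))
        = ((-1:F)^(l-s) * qBinom q l s * qBinom q (k+(s+1)) r *
            q ^ (((s+1).choose 2 : ℤ) - (l:ℤ) * (s:ℤ))) * q ^ (-(l:ℤ))
          - (-1:F)^(l-(s+1)) * qBinom q l (s+1) * qBinom q (k+(s+1)) r *
            q ^ ((((s+1)+1).choose 2 : ℤ) - (l:ℤ) * ((s+1 : ℕ):ℤ)) := by
      intro s hs
      rw [Finset.mem_range] at hs
      have hsub : l + 1 - (s + 1) = l - s := by omega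
      have hc : (((s+1)+1).choose 2 : ℤ) = ((s+1).choose 2 : ℤ) + (s+1) := by
        exact_mod_cast choose2_succ (s+1)
      have e1 : q ^ ((((s+1)+1).choose 2 : ℤ) - ((l+1 : ℕ):ℤ) * ((s+1 : ℕ):ℤ))
          = q ^ (((s+1).choose 2 : ℤ) - (l:ℤ) * (s:ℤ)) * q ^ (-(l:ℤ)) := by
        rw [← zpow_add₀ hq0]
        congr 1
        rw [hc]; push_cast; ring
      have e2 : (q:F) ^ (s+1) * q ^ ((((s+1)+1).choose 2 : ℤ) - ((l+1 : ℕ):ℤ) * ((s+1 : ℕ):ℤ))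
          = q ^ ((((s+1)+1).choose 2 : ℤ) - (l:ℤ) * ((s+1 : ℕ):ℤ)) := by
        rw [← zpow_natCast q (s+1), ← zpow_add₀ hq0]
        congr 1
        push_cast; ring
      have hsignB : (-1:F)^(l-s) * qBinom q l (s+1)
          = -((-1:F)^(l-(s+1)) * qBinom q l (s+1)) := by
        rcases Nat.lt_or_ge s l with hsl | hsl
        · have : l - s = (l - (s+1)) + 1 := by omega
          rw [this, pow_succ]; ring
        · have hsl' : l < s + 1 := by omega
          rw [qBinom_eq_zero q hsl']; ring
      rw [hsub, pascal₁ q hq l s, ← e2]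
      linear_combination ((-1:F)^(l-s) * qBinom q l s * qBinom q (k+(s+1)) r) * e1 +
        (qBinom q (k+(s+1)) r * q ^ (s+1) *
          q ^ ((((s+1)+1).choose 2 : ℤ) - ((l+1 : ℕ):ℤ) * ((s+1 : ℕ):ℤ))) * hsignB
    have hCsum : ∑ s ∈ Finset.range (l+1),
        (-1:F)^(l-(s+1)) * qBinom q l (s+1) * qBinom q (k+(s+1)) r *
          q ^ ((((s+1)+1).choose 2 : ℤ) - (l:ℤ) * ((s+1 : ℕ):ℤ))
        = (if l ≤ r then qBinom q k (r-l) *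
            q ^ ((l:ℤ) * ((k:ℤ) + (l:ℤ) - (r:ℤ)) - (l.choose 2 : ℤ)) else 0)
          - (-1:F)^l * qBinom q k r := by
      rw [Finset.sum_range_succ, qBinom_eq_zero q (Nat.lt_succ_self l)]
      have h := ih k r
      rw [Finset.sum_range_succ' _ l] at h
      simp only [show (((0+1).choose 2 : ℕ) : ℤ) = 0 from by norm_num, Nat.sub_zero, add_zero,
        Nat.cast_zero, mul_zero, sub_zero, zpow_zero,
        qBinom_zero_right q hq, mul_one, zero_mul, mul_zero, add_zero] at h ⊢
      linear_combination h
    rw [Finset.sum_congr rfl hstep, Finset.sum_sub_distrib, ← Finset.sum_mul, hCsum]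
    have hA : ∑ i ∈ Finset.range (l+1),
        (-1:F) ^ (l - i) * qBinom q l i * qBinom q (k + (i + 1)) r *
          q ^ (((i + 1).choose 2 : ℤ) - (l:ℤ) * (i:ℤ))
        = if l ≤ r then qBinom q (k+1) (r-l) *
            q ^ ((l:ℤ) * (((k+1:ℕ):ℤ) + (l:ℤ) - (r:ℤ)) - (l.choose 2 : ℤ)) else 0 := by
      rw [← ih (k+1) r]
      refine Finset.sum_congr rfl fun i _ => ?_
      rw [show k + 1 + i = k + (i + 1) from by omega]
    rw [hA]
    simp only [show (((0+1).choose 2 : ℕ) : ℤ) = 0 from by norm_num, Nat.sub_zero, add_zero,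
      Nat.cast_zero, mul_zero, sub_zero, zpow_zero, qBinom_zero_right q hq, mul_one, one_mul,
      pow_succ]
    have hcl : (((l+1).choose 2 : ℕ) : ℤ) = (l.choose 2 : ℤ) + l := by
      exact_mod_cast choose2_succ l
    by_cases hlr : l ≤ r
    · rw [if_pos hlr, if_pos hlr]
      rcases Nat.eq_or_lt_of_le hlr with heq | hlr2
      · subst heq
        rw [if_neg (by omega), Nat.sub_self, qBinom_zero_right q hq, qBinom_zero_right q hq]
        have f1 : q ^ ((l:ℤ) * (((k+1:ℕ):ℤ) + (l:ℤ) - (l:ℤ)) - ((l.choose 2 : ℕ) : ℤ)) * q ^ (-(l:ℤ))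
            = q ^ ((l:ℤ) * ((k:ℤ) + (l:ℤ) - (l:ℤ)) - ((l.choose 2 : ℕ) : ℤ)) := by
          rw [← zpow_add₀ hq0]; congr 1; push_cast; ring
        linear_combination f1
      · obtain ⟨e, rfl⟩ : ∃ e, r = l + 1 + e := ⟨r - l - 1, by omega⟩
        rw [if_pos (by omega : l + 1 ≤ l + 1 + e)]
        rw [show l + 1 + e - l = e + 1 from by omega, show l + 1 + e - (l + 1) = e from by omega]
        by_cases hek : e ≤ k
        · rw [pascal₂ q hq k e]
          have f1 : q ^ ((l:ℤ) * (((k+1:ℕ):ℤ) + (l:ℤ) - ((l+1+e : ℕ):ℤ)) - ((l.choose 2 : ℕ):ℤ)) *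
                q ^ (-(l:ℤ))
              = q ^ ((l:ℤ) * ((k:ℤ) + (l:ℤ) - ((l+1+e:ℕ):ℤ)) - ((l.choose 2 : ℕ):ℤ)) := by
            rw [← zpow_add₀ hq0]; congr 1; push_cast; ring
          have f2 : (q:F) ^ (k - e) *
              (q ^ ((l:ℤ) * (((k+1:ℕ):ℤ) + (l:ℤ) - ((l+1+e:ℕ):ℤ)) - ((l.choose 2 : ℕ):ℤ)) *
                q ^ (-(l:ℤ)))
              = q ^ (((l+1:ℕ):ℤ) * ((k:ℤ) + ((l+1:ℕ):ℤ) - ((l+1+e:ℕ):ℤ)) -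
                  (((l+1).choose 2 : ℕ):ℤ)) := by
            rw [← zpow_natCast q (k-e), ← zpow_add₀ hq0, ← zpow_add₀ hq0]
            congr 1
            rw [hcl]
            have hke : ((k - e : ℕ) : ℤ) = (k:ℤ) - e := by omega
            rw [hke]
            push_cast; ring
          linear_combination (qBinom q k e) * f2 + (qBinom q k (e+1)) * f1
        · rw [qBinom_eq_zero q (show k + 1 < e + 1 by omega),
            qBinom_eq_zero q (show k < e + 1 by omega),
            qBinom_eq_zero q (show k < e by omega),
            qBinom_eq_zero q (show k < l + 1 + e by omega)]
          ring
    · rw [if_neg hlr, if_neg hlr, if_neg (show ¬ (l + 1 ≤ r) from by omega)]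
      ring
omit hq0 in
lemma qbt' (n N : ℕ) (hn : n ≤ N) (x : F) :
    qPoch q (-x) n = ∑ m ∈ Finset.range (N+1), qBinom q n m * q ^ m.choose 2 * x ^ m := by
  rw [qbt q hq n x]
  apply Finset.sum_subset (Finset.range_subset_range.mpr (by omega))
  intro m _ hm
  rw [Finset.mem_range, not_lt] at hm
  rw [qBinom_eq_zero q (by omega)]
  ring

theorem main (i k l : ℕ) (hik : i ≤ k) (hil : i ≤ l) (t : F) :
    ∑ j ∈ Finset.range (l + 1), qBinom q l j * qBinom q (k + j) i *
        (-1 : F) ^ (l - j) * qPoch q (-(q ^ i * t)) (k + j - i) *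
        q ^ (((j + 1).choose 2 : ℤ) - (l : ℤ) * (j : ℤ) + (i.choose 2 : ℤ)) =
    ∑ j ∈ Finset.range (k + 1), qBinom q k j * qBinom q (l + j) i *
        t ^ (l + j - i) * q ^ (k * l + j.choose 2) := by
  obtain ⟨a, rfl⟩ : ∃ a, l = i + a := ⟨l - i, by omega⟩
  calc ∑ j ∈ Finset.range (i + a + 1), qBinom q (i+a) j * qBinom q (k + j) i *
        (-1 : F) ^ (i + a - j) * qPoch q (-(q ^ i * t)) (k + j - i) *
        q ^ (((j + 1).choose 2 : ℤ) - ((i+a : ℕ) : ℤ) * (j : ℤ) + (i.choose 2 : ℤ))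
      = ∑ j ∈ Finset.range (i + a + 1), ∑ m ∈ Finset.range (k + a + 1),
          ((-1:F) ^ (i + a - j) * qBinom q (i+a) j * qBinom q (k+j) (i+m) *
            q ^ ((((j+1).choose 2 : ℕ) : ℤ) - ((i+a : ℕ) : ℤ) * (j : ℤ)))
          * (qBinom q (i+m) i * q ^ m.choose 2 * (q ^ i * t) ^ m *
            q ^ (((i.choose 2 : ℕ)) : ℤ)) := by
        refine Finset.sum_congr rfl fun j hj => ?_
        rw [Finset.mem_range] at hj
        rw [qbt' q hq (k+j-i) (k+a) (by omega) (q ^ i * t), Finset.mul_sum, Finset.sum_mul]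
        refine Finset.sum_congr rfl fun m _ => ?_
        have tri := qBinom_tri q hq (k+j) i m
        have esp : q ^ ((((j + 1).choose 2 : ℕ) : ℤ) - ((i+a : ℕ) : ℤ) * (j : ℤ) +
              ((i.choose 2 : ℕ) : ℤ))
            = q ^ ((((j+1).choose 2 : ℕ) : ℤ) - ((i+a : ℕ) : ℤ) * (j : ℤ)) *
              q ^ (((i.choose 2 : ℕ)) : ℤ) := by
          rw [← zpow_add₀ hq0]
        rw [esp]
        linear_combination ((-1:F) ^ (i + a - j) * qBinom q (i+a) j * q ^ m.choose 2 *
          (q ^ i * t) ^ m * q ^ ((((j+1).choose 2 : ℕ) : ℤ) - ((i+a : ℕ) : ℤ) * (j : ℤ)) *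
          q ^ (((i.choose 2 : ℕ)) : ℤ)) * tri
    _ = ∑ m ∈ Finset.range (k + a + 1), ∑ j ∈ Finset.range (i + a + 1),
          ((-1:F) ^ (i + a - j) * qBinom q (i+a) j * qBinom q (k+j) (i+m) *
            q ^ ((((j+1).choose 2 : ℕ) : ℤ) - ((i+a : ℕ) : ℤ) * (j : ℤ)))
          * (qBinom q (i+m) i * q ^ m.choose 2 * (q ^ i * t) ^ m *
            q ^ (((i.choose 2 : ℕ)) : ℤ)) := Finset.sum_comm
    _ = ∑ m ∈ Finset.range (a + (k + 1)),
          (if i + a ≤ i + m then qBinom q k (i + m - (i + a)) *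
              q ^ (((i+a : ℕ) : ℤ) * ((k:ℤ) + ((i+a : ℕ) : ℤ) - ((i+m : ℕ) : ℤ)) -
                (((i+a).choose 2 : ℕ) : ℤ)) else 0)
          * (qBinom q (i+m) i * q ^ m.choose 2 * (q ^ i * t) ^ m *
            q ^ (((i.choose 2 : ℕ)) : ℤ)) := by
        rw [show a + (k+1) = k + a + 1 from by omega]
        refine Finset.sum_congr rfl fun m _ => ?_
        rw [← Finset.sum_mul, key q hq hq0 (i+a) k (i+m)]
    _ = ∑ j ∈ Finset.range (k + 1),
          (if i + a ≤ i + (a + j) then qBinom q k (i + (a + j) - (i + a)) *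
              q ^ (((i+a : ℕ) : ℤ) * ((k:ℤ) + ((i+a : ℕ) : ℤ) - ((i+(a+j) : ℕ) : ℤ)) -
                (((i+a).choose 2 : ℕ) : ℤ)) else 0)
          * (qBinom q (i+(a+j)) i * q ^ (a+j).choose 2 * (q ^ i * t) ^ (a+j) *
            q ^ (((i.choose 2 : ℕ)) : ℤ)) := by
        rw [Finset.sum_range_add]
        rw [Finset.sum_eq_zero fun m hm => ?_, zero_add]
        rw [Finset.mem_range] at hm
        rw [if_neg (by omega)]
        ring
    _ = ∑ j ∈ Finset.range (k + 1), qBinom q k j * qBinom q (i + a + j) i *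
          t ^ (i + a + j - i) * q ^ (k * (i + a) + j.choose 2) := by
        refine Finset.sum_congr rfl fun j _ => ?_
        rw [if_pos (by omega), show i + (a + j) - (i + a) = j from by omega,
          show i + (a + j) = i + a + j from by omega,
          show i + a + j - i = a + j from by omega]
        have c1 : (((a+j).choose 2 : ℕ) : ℤ) = ((a.choose 2 : ℕ) : ℤ) + a*j +
            ((j.choose 2 : ℕ) : ℤ) := by exact_mod_cast choose2_add a j
        have c2 : (((i+a).choose 2 : ℕ) : ℤ) = ((i.choose 2 : ℕ) : ℤ) + i*a +
            ((a.choose 2 : ℕ) : ℤ) := by exact_mod_cast choose2_add i a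
        have epow : q ^ (((i+a : ℕ) : ℤ) * ((k:ℤ) + ((i+a : ℕ) : ℤ) - ((i+a+j : ℕ) : ℤ)) -
              (((i+a).choose 2 : ℕ) : ℤ)) * q ^ (a+j).choose 2 * q ^ (i * (a+j)) *
              q ^ (((i.choose 2 : ℕ)) : ℤ)
            = q ^ (k * (i + a) + j.choose 2) := by
          rw [← zpow_natCast q ((a+j).choose 2), ← zpow_natCast q (i*(a+j)),
            ← zpow_natCast q (k * (i + a) + j.choose 2), ← zpow_add₀ hq0, ← zpow_add₀ hq0,
            ← zpow_add₀ hq0]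
          congr 1
          rw [c1, c2]
          push_cast
          ring
        rw [mul_pow, ← pow_mul]
        linear_combination (qBinom q k j * qBinom q (i+a+j) i * t ^ (a+j)) * epow
end

theorem stmt16 {F : Type*} [Field F] (q : F) (hq0 : q ≠ 0)
    (hq : ∀ m : ℕ, 0 < m → q ^ m ≠ 1) (i k l : ℕ) (hik : i ≤ k) (hil : i ≤ l)
    (t : F) :
    ∑ j ∈ Finset.range (l + 1), qBinom q l j * qBinom q (k + j) i *
        (-1 : F) ^ (l - j) * qPoch q (-(q ^ i * t)) (k + j - i) *
        q ^ (((j + 1).choose 2 : ℤ) - (l : ℤ) * (j : ℤ) + (i.choose 2 : ℤ)) =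
    ∑ j ∈ Finset.range (k + 1), qBinom q k j * qBinom q (l + j) i *
        t ^ (l + j - i) * q ^ (k * l + j.choose 2) := by
  exact main q hq hq0 i k l hik hil t
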